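/- Let n ≥ 1, v ∈ ℝⁿ, let α : ℝⁿ → ℝ be continuous, ℤⁿ-periodic, and nowhere vanishing, and let f : ℝⁿ → ℝ be arbitrary. If u₁, u₂ : ℝⁿ → ℝ are C¹, ℤⁿ-periodic, and satisfy Du_i(x)(v) + α(x)·u_i(x) = f(x) for all x ∈ ℝⁿ and i = 1, 2, then u₁ = u₂. -/

import Mathlib

/-- `ℤⁿ`-periodicity: the function descends to the flat torus `ℝⁿ/ℤⁿ`. -/
def ZPeriodic {n : ℕ} (g : (Fin n → ℝ) → ℝ) : Prop :=
  ∀ (x : Fin n → ℝ) (k : Fin n → ℤ), g (x + fun i => (k i : ℝ)) = g x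

/-- Uniqueness part of Lemma 6.2 on the flat torus: two `C¹` periodic solutions
of `∂_v u + α u = f` with `α` continuous, periodic and nowhere vanishing agree. -/
theorem stmt9 (n : ℕ) (hn : 1 ≤ n) (v : Fin n → ℝ)
    (α : (Fin n → ℝ) → ℝ) (hα : Continuous α) (hαp : ZPeriodic α)
    (hα0 : ∀ x, α x ≠ 0)
    (f : (Fin n → ℝ) → ℝ)
    (u₁ u₂ : (Fin n → ℝ) → ℝ)
    (hu₁ : ContDiff ℝ 1 u₁) (hu₁p : ZPeriodic u₁)
    (hu₂ : ContDiff ℝ 1 u₂) (hu₂p : ZPeriodic u₂)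
    (heq₁ : ∀ x, fderiv ℝ u₁ x v + α x * u₁ x = f x)
    (heq₂ : ∀ x, fderiv ℝ u₂ x v + α x * u₂ x = f x) :
    u₁ = u₂ := by
  set w : (Fin n → ℝ) → ℝ := fun x => u₁ x - u₂ x with hw
  have hd₁ : ∀ x, DifferentiableAt ℝ u₁ x := fun x =>
    (hu₁.differentiable one_ne_zero).differentiableAt
  have hd₂ : ∀ x, DifferentiableAt ℝ u₂ x := fun x =>
    (hu₂.differentiable one_ne_zero).differentiableAt
  have hwp : ∀ (x : Fin n → ℝ) (k : Fin n → ℤ),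
      w (x + fun i => (k i : ℝ)) = w x := by
    intro x k
    simp only [hw, hu₁p x k, hu₂p x k]
  have hwc : Continuous w := (hu₁.continuous).sub (hu₂.continuous)
  have hweq : ∀ x, fderiv ℝ w x v + α x * w x = 0 := by
    intro x
    have hf : fderiv ℝ w x = fderiv ℝ u₁ x - fderiv ℝ u₂ x :=
      fderiv_sub (hd₁ x) (hd₂ x)
    have h1 := heq₁ x
    have h2 := heq₂ x
    rw [hf]
    simp only [ContinuousLinearMap.sub_apply, hw]
    ring_nf
    nlinarith [h1, h2]
  -- reduce global max/min to Icc 0 1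
  have key : ∀ x, ∃ y ∈ Set.Icc (0 : Fin n → ℝ) 1, w x = w y := by
    intro x
    refine ⟨fun i => Int.fract (x i), ?_, ?_⟩
    · constructor
      · intro i; exact Int.fract_nonneg _
      · intro i; exact (Int.fract_lt_one _).le
    · have := hwp (fun i => Int.fract (x i)) (fun i => ⌊x i⌋)
      have hx : ((fun i => Int.fract (x i)) + fun i => ((⌊x i⌋ : ℤ) : ℝ)) = x := by
        funext i
        simp only [Pi.add_apply, Int.fract]
        ring
      rw [hx] at this
      exact this
  have hcpt : IsCompact (Set.Icc (0 : Fin n → ℝ) 1) := isCompact_Icc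
  have hne : (Set.Icc (0 : Fin n → ℝ) 1).Nonempty := ⟨0, by simp⟩
  obtain ⟨x₀, _, hx₀⟩ := hcpt.exists_isMaxOn hne hwc.continuousOn
  obtain ⟨x₁, _, hx₁⟩ := hcpt.exists_isMinOn hne hwc.continuousOn
  have hmax : ∀ x, w x ≤ w x₀ := by
    intro x
    obtain ⟨y, hy, hxy⟩ := key x
    rw [hxy]; exact hx₀ hy
  have hmin : ∀ x, w x₁ ≤ w x := by
    intro x
    obtain ⟨y, hy, hxy⟩ := key x
    rw [hxy]; exact hx₁ hy
  have hlm : IsLocalMax w x₀ := Filter.Eventually.of_forall hmax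
  have hln : IsLocalMin w x₁ := Filter.Eventually.of_forall hmin
  have hf0 : fderiv ℝ w x₀ = 0 := hlm.fderiv_eq_zero
  have hf1 : fderiv ℝ w x₁ = 0 := hln.fderiv_eq_zero
  have hw0 : w x₀ = 0 := by
    have := hweq x₀
    rw [hf0] at this
    simp at this
    exact this.resolve_left (hα0 x₀)
  have hw1 : w x₁ = 0 := by
    have := hweq x₁
    rw [hf1] at this
    simp at this
    exact this.resolve_left (hα0 x₁)
  funext x
  have h1 := hmax x
  have h2 := hmin x
  rw [hw0] at h1; rw [hw1] at h2
  have : w x = 0 := le_antisymm h1 h2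
  simpa [hw, sub_eq_zero] using this
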